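/- Let N ≥ 1, let A be an N×N complex Hermitian matrix, and let λ be a nonzero complex number that is not a negative real, with principal argument θ = arg λ ∈ (−π, π). Then the matrix I − i·√(λ/N)·A is invertible, and its operator norm satisfies ‖(I − i·√(λ/N)·A)⁻¹‖ ≤ 1/cos(θ/2). -/

import Mathlib

open scoped Matrix.Norms.L2Operator

set_option maxHeartbeats 1000000 in
/-- **Bound on the resolvent** (Lemma `boundresolvent`).
For `A` an `N × N` Hermitian matrix and `λ` a nonzero complex number which is not a
negative real, with `θ = arg λ ∈ (−π, π)`, the matrix `1 - i √(λ/N) A` is invertible and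
the ℓ² → ℓ² operator norm of its inverse is at most `1 / cos(θ/2)`.  Here `√` denotes the
principal branch of the complex square root, `√z = z^(1/2)`. -/
theorem resolvent_bound (N : ℕ) (hN : 1 ≤ N)
    (A : Matrix (Fin N) (Fin N) ℂ) (hA : A.IsHermitian)
    (lam : ℂ) (hlam0 : lam ≠ 0) (hlamneg : ¬ (lam.re < 0 ∧ lam.im = 0)) :
    IsUnit ((1 : Matrix (Fin N) (Fin N) ℂ)
        - (Complex.I * (lam / (N : ℂ)) ^ ((1 : ℂ)/2)) • A) ∧
      ‖((1 : Matrix (Fin N) (Fin N) ℂ)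
        - (Complex.I * (lam / (N : ℂ)) ^ ((1 : ℂ)/2)) • A)⁻¹‖
        ≤ 1 / Real.cos (Complex.arg lam / 2) := by
  classical
  set θ := Complex.arg lam with hθ
  have hθlt : θ < Real.pi :=
    lt_of_le_of_ne (Complex.arg_le_pi lam)
      (fun h => hlamneg (Complex.arg_eq_pi_iff.mp h))
  have hθgt : -Real.pi < θ := Complex.neg_pi_lt_arg lam
  have hcos : 0 < Real.cos (θ / 2) :=
    Real.cos_pos_of_mem_Ioo ⟨by linarith, by linarith⟩
  have hN0 : (N : ℂ) ≠ 0 := Nat.cast_ne_zero.mpr (by omega)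
  have hz : lam / (N : ℂ) ≠ 0 := div_ne_zero hlam0 hN0
  have hargz : Complex.arg (lam / (N : ℂ)) = θ := by
    have h1 : lam / (N : ℂ) = (((N : ℝ)⁻¹ : ℝ) : ℂ) * lam := by
      push_cast; field_simp
    rw [h1, Complex.arg_real_mul lam (by positivity)]
  set w : ℂ := (lam / (N : ℂ)) ^ ((1 : ℂ)/2) with hw
  have hwexp : w = Complex.exp (Complex.log (lam / (N : ℂ)) * ((1 : ℂ)/2)) := by
    rw [hw, Complex.cpow_def_of_ne_zero hz]
  set r : ℝ := ‖w‖ with hr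
  set s : ℝ := Real.sin (θ / 2) with hs
  have hr0 : 0 ≤ r := norm_nonneg w
  have hwabs : r = Real.exp ((Complex.log (lam / (N : ℂ))).re / 2) := by
    rw [hr, hwexp, Complex.norm_exp]
    congr 1
    simp [Complex.mul_re]
    ring
  have hre2 : (Complex.log (lam / (N : ℂ)) * ((1 : ℂ)/2)).re
      = (Complex.log (lam / (N : ℂ))).re / 2 := by
    simp [Complex.mul_re]; ring
  have him2 : (Complex.log (lam / (N : ℂ)) * ((1 : ℂ)/2)).im = θ / 2 := by
    have : (Complex.log (lam / (N : ℂ)) * ((1 : ℂ)/2)).im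
        = (Complex.log (lam / (N : ℂ))).im / 2 := by
      simp [Complex.mul_im]; ring
    rw [this, Complex.log_im, hargz]
  have hwim : w.im = r * s := by
    rw [hwexp, Complex.exp_im, hre2, him2, hwabs, hs]
  set c : ℂ := Complex.I * w with hc
  have hcre : c.re = -(r * s) := by
    rw [hc]
    simp [Complex.mul_re, hwim]
  have hcabs : ‖c‖ = r := by
    rw [hc]; simp [map_mul, hr]
  set M : Matrix (Fin N) (Fin N) ℂ := 1 - c • A with hM
  set e := Matrix.toEuclideanCLM (n := Fin N) (𝕜 := ℂ) with he
  clear_value θ w r s c M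
  -- key inequality
  have key : ∀ x : EuclideanSpace ℂ (Fin N),
      Real.cos (θ / 2) * ‖x‖ ≤ ‖e M x‖ := by
    intro x
    have hMx : e M x = x - c • (e A x) := by
      rw [hM, map_sub, map_smul, map_one]
      simp
    set y := e A x with hy
    set a : ℂ := inner ℂ x y with ha
    clear_value y a
    have haim : a.im = 0 := by
      have hsym : (Matrix.toEuclideanLin A).IsSymmetric :=
        Matrix.isHermitian_iff_isSymmetric.mp hA
      have h1 : (inner ℂ (y) x : ℂ) = inner ℂ x y := by
        have := hsym x x
        simpa [← Matrix.coe_toEuclideanCLM_eq_toEuclideanLin (𝕜 := ℂ), hy] using this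
      have h2 : (starRingEnd ℂ) a = a := by
        rw [ha, inner_conj_symm y x]; exact h1
      exact Complex.conj_eq_iff_im.mp h2
    have hCS : |a.re| ≤ ‖x‖ * ‖y‖ := by
      have h1 : ‖a‖ ≤ ‖x‖ * ‖y‖ := by
        rw [ha]
        exact norm_inner_le_norm x y
      exact le_trans (Complex.abs_re_le_norm a) h1
    have hsq : ‖e M x‖ ^ 2 = ‖x‖ ^ 2 + 2 * (r * s) * a.re + (r * ‖y‖) ^ 2 := by
      rw [hMx, @norm_sub_sq ℂ]
      have h1 : (inner ℂ x (c • y) : ℂ) = c * a := by rw [inner_smul_right, ha]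
      have h2 : RCLike.re (inner ℂ x (c • y) : ℂ) = -(r * s) * a.re := by
        rw [h1]
        simp [Complex.mul_re, hcre, haim]
      have h3 : ‖c • y‖ = r * ‖y‖ := by
        rw [norm_smul, hcabs]
      rw [h2, h3]; ring
    obtain ⟨n, hn⟩ : ∃ n, ‖x‖ = n := ⟨_, rfl⟩
    obtain ⟨b, hb⟩ : ∃ b, ‖y‖ = b := ⟨_, rfl⟩
    obtain ⟨t, ht⟩ : ∃ t, a.re = t := ⟨_, rfl⟩
    obtain ⟨m, hm⟩ : ∃ m, ‖e M x‖ = m := ⟨_, rfl⟩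
    have hm0 : 0 ≤ m := hm ▸ norm_nonneg _
    have hn0 : 0 ≤ n := hn ▸ norm_nonneg _
    rw [hn, hb, ht, hm] at hsq
    rw [hn, hb, ht] at hCS
    rw [hn, hm]
    have h4 : -(r * (|s| * (n * b))) ≤ r * (s * t) := by
      have hsa : -(|s| * (n * b)) ≤ s * t := by
        have h5 : |s * t| ≤ |s| * (n * b) := by
          rw [abs_mul]
          exact mul_le_mul_of_nonneg_left hCS (abs_nonneg s)
        linarith [neg_abs_le (s * t), neg_le_neg h5]
      calc -(r * (|s| * (n * b))) = r * (-(|s| * (n * b))) := by ring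
        _ ≤ r * (s * t) := mul_le_mul_of_nonneg_left hsa hr0
    have hq : 0 ≤ (r * b) ^ 2 - 2 * (r * b) * (|s| * n) + s ^ 2 * n ^ 2 := by
      nlinarith [sq_nonneg (r * b - |s| * n), sq_abs s]
    have hcs : Real.cos (θ / 2) ^ 2 * n ^ 2 = (1 - s ^ 2) * n ^ 2 := by
      have h6 := Real.sin_sq_add_cos_sq (θ / 2)
      rw [hs]; linear_combination n ^ 2 * h6
    have h2 : (Real.cos (θ / 2) * n) ^ 2 ≤ m ^ 2 := by
      rw [hsq]; linarith [h4, hq, hcs]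
    have hnn : 0 ≤ Real.cos (θ / 2) * n := by positivity
    calc Real.cos (θ / 2) * n = Real.sqrt ((Real.cos (θ / 2) * n) ^ 2) :=
          (Real.sqrt_sq hnn).symm
      _ ≤ Real.sqrt (m ^ 2) := Real.sqrt_le_sqrt h2
      _ = m := Real.sqrt_sq hm0
  -- invertibility
  have hinj : Function.Injective M.mulVec := by
    intro u v huv
    have h1 : e M ((WithLp.equiv 2 _).symm u) = e M ((WithLp.equiv 2 _).symm v) := by
      simp only [he, WithLp.equiv_symm_apply, Matrix.toEuclideanCLM_toLp, Matrix.toLin'_apply, huv]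
    have h2 : e M ((WithLp.equiv 2 _).symm u - (WithLp.equiv 2 _).symm v) = 0 := by
      rw [map_sub, h1, sub_self]
    have h3 := key ((WithLp.equiv 2 _).symm u - (WithLp.equiv 2 _).symm v)
    rw [h2] at h3
    simp only [norm_zero] at h3
    have h4 : ‖(WithLp.equiv 2 _).symm u - (WithLp.equiv 2 _).symm v‖ = 0 := by
      nlinarith [norm_nonneg ((WithLp.equiv 2 _).symm u - (WithLp.equiv 2 _).symm v)]
    have h5 : (WithLp.equiv 2 _).symm u = (WithLp.equiv 2 _).symm v :=
      sub_eq_zero.mp (norm_eq_zero.mp h4)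
    exact (WithLp.equiv 2 _).symm.injective h5
  have hunit : IsUnit M := Matrix.mulVec_injective_iff_isUnit.mp hinj
  refine ⟨hunit, ?_⟩
  -- norm bound
  obtain ⟨u, hu⟩ := hunit
  have hMinv : M * M⁻¹ = 1 := Matrix.mul_nonsing_inv M
    (M.isUnit_iff_isUnit_det.mp ⟨u, hu⟩)
  have hcomp : e M * e M⁻¹ = 1 := by rw [← map_mul, hMinv, map_one]
  have hbound : ∀ z : EuclideanSpace ℂ (Fin N),
      ‖e M⁻¹ z‖ ≤ (1 / Real.cos (θ / 2)) * ‖z‖ := by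
    intro z
    have h1 : e M (e M⁻¹ z) = z := by
      have := congrArg (fun f => f z) hcomp
      simpa using this
    have h2 := key (e M⁻¹ z)
    rw [h1] at h2
    rw [div_mul_eq_mul_div, le_div_iff₀ hcos, mul_comm]
    linarith
  have : ‖(M : Matrix (Fin N) (Fin N) ℂ)⁻¹‖ ≤ 1 / Real.cos (θ / 2) := by
    rw [Matrix.cstar_norm_def]
    exact ContinuousLinearMap.opNorm_le_bound _ (by positivity) hbound
  exact this
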